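/- Let X be a real n×p matrix with rank(X) = p and β₀ ∈ ℝᵖ. On a probability space, let S : Ω → ℝ^{r×n} (p ≤ r ≤ n) be a random matrix with rank(S(ω)X) = p almost surely, let Y(ω) be the Moore–Penrose inverse of S(ω)X, set P(ω) = XY(ω)S(ω) and P_X = X(XᵀX)⁻¹Xᵀ, and let ε : Ω → ℝⁿ be independent of S with E[ε_i] = 0 and E[ε_iε_j] = σ²δ_{ij} (σ > 0); assume square-integrability of all relevant entries. Set y = Xβ₀ + ε, ỹ = Py, and ŷ = P_X y. Then the total predictive risk satisfies Risk(ỹ, Xβ₀) := E[‖ỹ − Xβ₀‖₂²] = E[‖ŷ − Xβ₀‖₂²] + σ²·trace(E[PPᵀ] − P_X), and consequently Risk(ỹ, Xβ₀) ≥ Risk(ŷ, Xβ₀) = σ²·p. -/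

import Mathlib

open Matrix MeasureTheory ENNReal

lemma aux_isUnit {p : ℕ} (M : Matrix (Fin p) (Fin p) ℝ) (h : M.rank = p) : IsUnit M := by
  rw [← Matrix.mulVec_surjective_iff_isUnit]
  have h2 : LinearMap.range M.mulVecLin = ⊤ := by
    apply Submodule.eq_top_of_finrank_eq
    rw [Matrix.rank] at h
    simp [h]
  have h3 := LinearMap.range_eq_top.mp h2
  intro v
  obtain ⟨w, hw⟩ := h3 v
  exact ⟨w, by simpa [Matrix.mulVecLin_apply] using hw⟩

lemma aux_pinv {r p : ℕ} (A : Matrix (Fin r) (Fin p) ℝ) (Y : Matrix (Fin p) (Fin r) ℝ)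
    (h1 : A * Y * A = A) (h3 : (A * Y)ᵀ = A * Y) (hr : A.rank = p) :
    Y * A = 1 ∧ Y = (Aᵀ * A)⁻¹ * Aᵀ := by
  have h5 : A * (Y * A) = A := by rw [← Matrix.mul_assoc, h1]
  have hrk : (Y * A).rank = p := by
    refine le_antisymm (by simpa using Matrix.rank_le_card_width (Y * A)) ?_
    calc p = A.rank := hr.symm
      _ = (A * (Y * A)).rank := by rw [h5]
      _ ≤ (Y * A).rank := Matrix.rank_mul_le_right _ _
  have hU : IsUnit (Y * A) := aux_isUnit _ hrk
  have hYA : Y * A = 1 := by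
    have hid : (Y * A) * (Y * A) = (Y * A) * 1 := by
      rw [Matrix.mul_one, Matrix.mul_assoc, h5]
    exact hU.mul_left_cancel hid
  refine ⟨hYA, ?_⟩
  have hU2d : IsUnit (Aᵀ * A).det := by
    rw [← Matrix.isUnit_iff_isUnit_det]
    exact aux_isUnit _ (by rw [Matrix.rank_transpose_mul_self, hr])
  have hAt : (Aᵀ * A) * Y = Aᵀ := by
    have := congrArg Matrix.transpose h1
    rw [Matrix.transpose_mul, h3] at this
    calc (Aᵀ * A) * Y = Aᵀ * (A * Y) := by rw [Matrix.mul_assoc]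
      _ = Aᵀ := this
  calc Y = ((Aᵀ * A)⁻¹ * (Aᵀ * A)) * Y := by rw [Matrix.nonsing_inv_mul _ hU2d, Matrix.one_mul]
    _ = (Aᵀ * A)⁻¹ * ((Aᵀ * A) * Y) := by rw [Matrix.mul_assoc]
    _ = (Aᵀ * A)⁻¹ * Aᵀ := by rw [hAt]

lemma aux_meas_mul {α : Type*} [MeasurableSpace α] {l m k : Type*} [Fintype m]
    {f : α → Matrix l m ℝ} {g : α → Matrix m k ℝ}
    (hf : ∀ i j, Measurable fun a => f a i j) (hg : ∀ i j, Measurable fun a => g a i j) :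
    ∀ i j, Measurable fun a => (f a * g a) i j := by
  intro i j
  simp only [Matrix.mul_apply]
  exact Finset.measurable_sum _ fun c _ => (hf i c).mul (hg c j)

lemma aux_meas_det {α : Type*} [MeasurableSpace α] {m : Type*} [Fintype m] [DecidableEq m]
    {f : α → Matrix m m ℝ} (hf : ∀ i j, Measurable fun a => f a i j) :
    Measurable fun a => (f a).det := by
  simp only [Matrix.det_apply']
  exact Finset.measurable_sum _ fun σ _ =>
    (measurable_const.mul (Finset.measurable_prod _ fun i _ => hf (σ i) i))

lemma aux_meas_inv {α : Type*} [MeasurableSpace α] {m : Type*} [Fintype m] [DecidableEq m]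
    {f : α → Matrix m m ℝ} (hf : ∀ i j, Measurable fun a => f a i j) :
    ∀ i j, Measurable fun a => (f a)⁻¹ i j := by
  intro i j
  simp only [Matrix.inv_def, Matrix.smul_apply, Ring.inverse_eq_inv', smul_eq_mul]
  refine Measurable.mul (measurable_inv.comp (aux_meas_det hf)) ?_
  simp only [Matrix.adjugate_apply]
  apply aux_meas_det
  intro i' j'
  simp only [Matrix.updateRow_apply]
  by_cases h : i' = j <;> simp [h] <;> exact hf i' j'

lemma aux_eps_int {Ω : Type*} [MeasurableSpace Ω] {μ : Measure Ω} [IsFiniteMeasure μ]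
    {f g : Ω → ℝ} (hf : MemLp f 2 μ) (hg : MemLp g 2 μ) :
    Integrable (fun ω => f ω * g ω) μ := by
  have h12 : (1 : ℝ≥0∞) / 1 = 1 / 2 + 1 / 2 := by
    simp
    exact ENNReal.inv_two_add_inv_two.symm
  have h := (hg.smul hf (p := 2) (q := 2) (r := 1)).integrable le_rfl
  simpa [Pi.smul_apply', smul_eq_mul, Pi.mul_def] using h

lemma aux_risk {Ω : Type*} [MeasurableSpace Ω] (μ : Measure Ω) [IsProbabilityMeasure μ]
    {n m : ℕ} (σ : ℝ) (ε : Ω → Fin n → ℝ)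
    (hεL2 : ∀ i, MemLp (fun ω => ε ω i) 2 μ)
    (hεcov : ∀ i j, ∫ ω, ε ω i * ε ω j ∂μ = if i = j then σ ^ 2 else 0)
    (Q : Ω → Matrix (Fin m) (Fin n) ℝ)
    (hQint : ∀ i j k, Integrable (fun ω => Q ω i j * Q ω i k) μ)
    (hQind : ∀ i j k, ProbabilityTheory.IndepFun
      (fun ω => Q ω i j * Q ω i k) (fun ω => ε ω j * ε ω k) μ) :
    ∫ ω, ∑ i, ((Q ω *ᵥ ε ω) i) ^ 2 ∂μ
      = σ ^ 2 * ∑ i, ∑ j, ∫ ω, Q ω i j * Q ω i j ∂μ := by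
  have hεint : ∀ j k, Integrable (fun ω => ε ω j * ε ω k) μ :=
    fun j k => aux_eps_int (hεL2 j) (hεL2 k)
  have hterm : ∀ i j k,
      Integrable (fun ω => (Q ω i j * Q ω i k) * (ε ω j * ε ω k)) μ :=
    fun i j k => (hQind i j k).integrable_mul (hQint i j k) (hεint j k)
  have h1 : ∀ ω, ∑ i, ((Q ω *ᵥ ε ω) i) ^ 2
      = ∑ i, ∑ j, ∑ k, (Q ω i j * Q ω i k) * (ε ω j * ε ω k) := by
    intro ω
    refine Finset.sum_congr rfl fun i _ => ?_
    have : (Q ω *ᵥ ε ω) i = ∑ j, Q ω i j * ε ω j := by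
      simp [Matrix.mulVec, dotProduct]
    rw [this, sq, Finset.sum_mul_sum]
    exact Finset.sum_congr rfl fun j _ => Finset.sum_congr rfl fun k _ => by ring
  have h2 : ∀ i j k, ∫ ω, (Q ω i j * Q ω i k) * (ε ω j * ε ω k) ∂μ
      = (∫ ω, Q ω i j * Q ω i k ∂μ) * (if j = k then σ ^ 2 else 0) := by
    intro i j k
    rw [← hεcov j k]
    have := (hQind i j k).integral_mul_eq_mul_integral (hQint i j k).aestronglyMeasurable
      (hεint j k).aestronglyMeasurable
    simpa [Pi.mul_apply] using this
  calc ∫ ω, ∑ i, ((Q ω *ᵥ ε ω) i) ^ 2 ∂μ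
      = ∫ ω, ∑ i, ∑ j, ∑ k, (Q ω i j * Q ω i k) * (ε ω j * ε ω k) ∂μ :=
        integral_congr_ae (Filter.EventuallyEq.of_eq (funext h1))
    _ = ∑ i, ∫ ω, ∑ j, ∑ k, (Q ω i j * Q ω i k) * (ε ω j * ε ω k) ∂μ :=
        integral_finset_sum _ fun i _ => integrable_finset_sum _ fun j _ =>
          integrable_finset_sum _ fun k _ => hterm i j k
    _ = ∑ i, ∑ j, ∑ k, ∫ ω, (Q ω i j * Q ω i k) * (ε ω j * ε ω k) ∂μ := by
        refine Finset.sum_congr rfl fun i _ => ?_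
        rw [integral_finset_sum _ fun j _ => integrable_finset_sum _ fun k _ => hterm i j k]
        exact Finset.sum_congr rfl fun j _ =>
          integral_finset_sum _ fun k _ => hterm i j k
    _ = ∑ i, ∑ j, (∫ ω, Q ω i j * Q ω i j ∂μ) * σ ^ 2 := by
        refine Finset.sum_congr rfl fun i _ => Finset.sum_congr rfl fun j _ => ?_
        simp only [h2, mul_ite, mul_zero]
        rw [Finset.sum_ite_eq]
        simp
    _ = σ ^ 2 * ∑ i, ∑ j, ∫ ω, Q ω i j * Q ω i j ∂μ := by
        rw [Finset.mul_sum]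
        refine Finset.sum_congr rfl fun i _ => ?_
        rw [Finset.mul_sum]
        exact Finset.sum_congr rfl fun j _ => by ring

/-- total predictive risk conditioned on rank preservation:
if `rank(S(ω)X) = p` almost surely and `ε` (mean zero, covariance `σ²I`) is
independent of `S`, then with `y = Xβ₀ + ε`, `ỹ = P y`, `ŷ = P_X y`,
`Risk(ỹ, Xβ₀) = E‖ỹ - Xβ₀‖₂² = Risk(ŷ, Xβ₀) + σ² trace(E[PPᵀ] - P_X)`, and
consequently `Risk(ỹ, Xβ₀) ≥ Risk(ŷ, Xβ₀) = σ² p`. -/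
theorem total_predictive_risk_rank_preserved
    {n p r : ℕ} (X : Matrix (Fin n) (Fin p) ℝ) (hX : X.rank = p)
    (hpr : p ≤ r) (hrn : r ≤ n)
    (PX : Matrix (Fin n) (Fin n) ℝ) (hPX : PX = X * (Xᵀ * X)⁻¹ * Xᵀ)
    {Ω : Type*} [MeasurableSpace Ω] (μ : Measure Ω) [IsProbabilityMeasure μ]
    (S : Ω → Matrix (Fin r) (Fin n) ℝ)
    (Y : Ω → Matrix (Fin p) (Fin r) ℝ)
    (hp1 : ∀ ω, (S ω * X) * Y ω * (S ω * X) = S ω * X)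
    (hp2 : ∀ ω, Y ω * ((S ω * X) * Y ω) = Y ω)
    (hp3 : ∀ ω, ((S ω * X) * Y ω)ᵀ = (S ω * X) * Y ω)
    (hp4 : ∀ ω, (Y ω * (S ω * X))ᵀ = Y ω * (S ω * X))
    (hrank : ∀ᵐ ω ∂μ, (S ω * X).rank = p)
    (P : Ω → Matrix (Fin n) (Fin n) ℝ) (hP : ∀ ω, P ω = X * Y ω * S ω)
    (β₀ : Fin p → ℝ) (σ : ℝ) (hσ : 0 < σ) (ε : Ω → Fin n → ℝ)
    (hindep : ProbabilityTheory.IndepFun ε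
      ((fun ω i j => S ω i j) : Ω → Fin r → Fin n → ℝ) μ)
    (hεL2 : ∀ i, MemLp (fun ω => ε ω i) 2 μ)
    (hεmean : ∀ i, ∫ ω, ε ω i ∂μ = 0)
    (hεcov : ∀ i j, ∫ ω, ε ω i * ε ω j ∂μ = if i = j then σ ^ 2 else 0)
    (hYSL2 : ∀ i j, MemLp (fun ω => (Y ω * S ω) i j) 2 μ)
    (hPPTint : ∀ i j, Integrable (fun ω => (P ω * (P ω)ᵀ) i j) μ)
    (EPPT : Matrix (Fin n) (Fin n) ℝ)
    (hEPPT : ∀ i j, EPPT i j = ∫ ω, (P ω * (P ω)ᵀ) i j ∂μ)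
    (y : Ω → Fin n → ℝ) (hy : ∀ ω, y ω = X *ᵥ β₀ + ε ω)
    (ytilde : Ω → Fin n → ℝ) (hytilde : ∀ ω, ytilde ω = P ω *ᵥ y ω)
    (yhat : Ω → Fin n → ℝ) (hyhat : ∀ ω, yhat ω = PX *ᵥ y ω)
    (hriskt : Integrable (fun ω => ∑ i, (ytilde ω i - (X *ᵥ β₀) i) ^ 2) μ)
    (hriskh : Integrable (fun ω => ∑ i, (yhat ω i - (X *ᵥ β₀) i) ^ 2) μ) :
    (∫ ω, ∑ i, (ytilde ω i - (X *ᵥ β₀) i) ^ 2 ∂μ) =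
      (∫ ω, ∑ i, (yhat ω i - (X *ᵥ β₀) i) ^ 2 ∂μ) +
        σ ^ 2 * (EPPT - PX).trace ∧
    (∫ ω, ∑ i, (yhat ω i - (X *ᵥ β₀) i) ^ 2 ∂μ) = σ ^ 2 * p ∧
    (∫ ω, ∑ i, (yhat ω i - (X *ᵥ β₀) i) ^ 2 ∂μ) ≤
      ∫ ω, ∑ i, (ytilde ω i - (X *ᵥ β₀) i) ^ 2 ∂μ := by
  -- deterministic facts about PX
  have hXd : IsUnit (Xᵀ * X).det := by
    rw [← Matrix.isUnit_iff_isUnit_det]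
    exact aux_isUnit _ (by rw [Matrix.rank_transpose_mul_self, hX])
  have hPXX : PX * X = X := by
    rw [hPX, Matrix.mul_assoc, Matrix.mul_assoc, Matrix.nonsing_inv_mul _ hXd,
      Matrix.mul_one]
  have hPXT : PXᵀ = PX := by
    rw [hPX, Matrix.transpose_mul, Matrix.transpose_mul, Matrix.transpose_transpose,
      Matrix.transpose_nonsing_inv, Matrix.transpose_mul, Matrix.transpose_transpose,
      Matrix.mul_assoc]
  have hPXidem : PX * PX = PX := by
    nth_rewrite 2 [hPX]
    rw [← Matrix.mul_assoc, ← Matrix.mul_assoc, hPXX, ← hPX]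
  have hPXtr : PX.trace = (p : ℝ) := by
    rw [hPX, Matrix.trace_mul_comm, ← Matrix.mul_assoc, Matrix.mul_nonsing_inv _ hXd,
      Matrix.trace_one]
    simp
  -- a.e. facts from rank preservation
  have hgood : ∀ᵐ ω ∂μ, Y ω * (S ω * X) = 1 ∧
      Y ω = ((S ω * X)ᵀ * (S ω * X))⁻¹ * (S ω * X)ᵀ := by
    filter_upwards [hrank] with ω hω
    exact aux_pinv (S ω * X) (Y ω) (hp1 ω) (hp3 ω) hω
  have haePX : ∀ᵐ ω ∂μ, P ω * X = X := by
    filter_upwards [hgood] with ω hω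
    rw [hP ω, Matrix.mul_assoc, Matrix.mul_assoc, hω.1, Matrix.mul_one]
  have hPrep : ∀ᵐ ω ∂μ, P ω =
      X * ((((S ω * X)ᵀ * (S ω * X))⁻¹ * (S ω * X)ᵀ) * S ω) := by
    filter_upwards [hgood] with ω hω
    rw [hP ω, Matrix.mul_assoc, hω.2]
  -- measurability of the representation
  have hM0 : ∀ (i : Fin r) (j : Fin n),
      Measurable fun (M : Fin r → Fin n → ℝ) => Matrix.of M i j :=
    fun i j => (measurable_pi_apply j).comp (measurable_pi_apply i)
  have hMA : ∀ (i : Fin r) (j : Fin p),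
      Measurable fun (M : Fin r → Fin n → ℝ) => (Matrix.of M * X) i j :=
    aux_meas_mul hM0 (fun _ _ => measurable_const)
  have hMAT : ∀ (i : Fin p) (j : Fin r),
      Measurable fun (M : Fin r → Fin n → ℝ) => (Matrix.of M * X)ᵀ i j := by
    intro i j
    simp only [Matrix.transpose_apply]
    exact hMA j i
  have hMB := aux_meas_mul hMAT hMA
  have hMBi := aux_meas_inv hMB
  have hMC := aux_meas_mul hMBi hMAT
  have hMD := aux_meas_mul hMC hM0
  have hgg : ∀ (i j : Fin n), Measurable fun (M : Fin r → Fin n → ℝ) =>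
      (X * ((((Matrix.of M * X)ᵀ * (Matrix.of M * X))⁻¹ * (Matrix.of M * X)ᵀ) *
        Matrix.of M)) i j :=
    aux_meas_mul (fun _ _ => measurable_const) hMD
  -- independence of products
  have hPind : ∀ (i : Fin n) (j k : Fin n), ProbabilityTheory.IndepFun
      (fun ω => P ω i j * P ω i k) (fun ω => ε ω j * ε ω k) μ := by
    intro i j k
    have hφ : Measurable fun (v : Fin n → ℝ) => v j * v k :=
      (measurable_pi_apply j).mul (measurable_pi_apply k)
    have hψ : Measurable fun (M : Fin r → Fin n → ℝ) =>
        (X * ((((Matrix.of M * X)ᵀ * (Matrix.of M * X))⁻¹ * (Matrix.of M * X)ᵀ) *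
          Matrix.of M)) i j *
        (X * ((((Matrix.of M * X)ᵀ * (Matrix.of M * X))⁻¹ * (Matrix.of M * X)ᵀ) *
          Matrix.of M)) i k := (hgg i j).mul (hgg i k)
    have h := (hindep.comp hφ hψ).symm
    refine h.congr ?_ ?_
    · filter_upwards [hPrep] with ω hω
      simp only [Function.comp_apply]
      rw [hω]
      rfl
    · exact Filter.EventuallyEq.of_eq rfl
  -- L² of P entries
  have hPL2 : ∀ (i j : Fin n), MemLp (fun ω => P ω i j) 2 μ := by
    intro i j
    have he : (fun ω => P ω i j) = fun ω => ∑ k, X i k * (Y ω * S ω) k j := by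
      funext ω
      rw [hP ω, Matrix.mul_assoc, Matrix.mul_apply]
    rw [he]
    exact memLp_finset_sum _ fun k _ => (hYSL2 k j).const_mul _
  have hPprod : ∀ (i j k : Fin n), Integrable (fun ω => P ω i j * P ω i k) μ :=
    fun i j k => aux_eps_int (hPL2 i j) (hPL2 i k)
  -- risk of ytilde
  have hytilde' : ∀ᵐ ω ∂μ, ∑ i, (ytilde ω i - (X *ᵥ β₀) i) ^ 2
      = ∑ i, ((P ω *ᵥ ε ω) i) ^ 2 := by
    filter_upwards [haePX] with ω hω
    refine Finset.sum_congr rfl fun i _ => ?_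
    rw [hytilde ω, hy ω, Matrix.mulVec_add, Matrix.mulVec_mulVec, hω]
    simp
  have hRt : ∫ ω, ∑ i, (ytilde ω i - (X *ᵥ β₀) i) ^ 2 ∂μ
      = σ ^ 2 * ∑ i, ∑ j, ∫ ω, P ω i j * P ω i j ∂μ := by
    rw [integral_congr_ae hytilde']
    exact aux_risk μ σ ε hεL2 hεcov P hPprod hPind
  have hsum_tr : ∀ i : Fin n, ∑ j, ∫ ω, P ω i j * P ω i j ∂μ = EPPT i i := by
    intro i
    rw [← integral_finset_sum _ fun j _ => hPprod i j j, hEPPT i i]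
    refine integral_congr_ae (Filter.EventuallyEq.of_eq (funext fun ω => ?_))
    simp [Matrix.mul_apply]
  have hRt2 : ∫ ω, ∑ i, (ytilde ω i - (X *ᵥ β₀) i) ^ 2 ∂μ = σ ^ 2 * EPPT.trace := by
    rw [hRt]
    congr 1
    rw [Matrix.trace]
    exact Finset.sum_congr rfl fun i _ => hsum_tr i
  -- risk of yhat
  have hyhat' : ∀ ω, ∑ i, (yhat ω i - (X *ᵥ β₀) i) ^ 2
      = ∑ i, ((PX *ᵥ ε ω) i) ^ 2 := by
    intro ω
    refine Finset.sum_congr rfl fun i _ => ?_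
    rw [hyhat ω, hy ω, Matrix.mulVec_add, Matrix.mulVec_mulVec, hPXX]
    simp
  have hcind : ∀ (i j k : Fin n), ProbabilityTheory.IndepFun
      (fun _ => PX i j * PX i k) (fun ω => ε ω j * ε ω k) μ := by
    intro i j k
    have hφ : Measurable fun (v : Fin n → ℝ) => v j * v k :=
      (measurable_pi_apply j).mul (measurable_pi_apply k)
    have h := (hindep.comp hφ
      (measurable_const : Measurable fun (_ : Fin r → Fin n → ℝ) =>
        PX i j * PX i k)).symm
    exact h.congr (Filter.EventuallyEq.of_eq rfl) (Filter.EventuallyEq.of_eq rfl)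
  have hRh : ∫ ω, ∑ i, (yhat ω i - (X *ᵥ β₀) i) ^ 2 ∂μ = σ ^ 2 * (p : ℝ) := by
    rw [integral_congr_ae (Filter.EventuallyEq.of_eq (funext hyhat'))]
    rw [aux_risk μ σ ε hεL2 hεcov (fun _ => PX)
      (fun i j k => integrable_const _) hcind]
    congr 1
    have : ∀ (i j : Fin n), ∫ (_ : Ω), PX i j * PX i j ∂μ = PX i j * PX i j := by
      intro i j; simp
    calc ∑ i, ∑ j, ∫ (_ : Ω), PX i j * PX i j ∂μ
        = ∑ i, ∑ j, PX i j * PX i j :=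
          Finset.sum_congr rfl fun i _ => Finset.sum_congr rfl fun j _ => this i j
      _ = ∑ i, (PX * PXᵀ) i i := by
          refine Finset.sum_congr rfl fun i _ => ?_
          simp [Matrix.mul_apply]
      _ = (PX * PXᵀ).trace := by simp [Matrix.trace, Matrix.diag]
      _ = (p : ℝ) := by rw [hPXT, hPXidem, hPXtr]
  -- trace inequality
  have hEtr : (p : ℝ) ≤ EPPT.trace := by
    have h1 : EPPT.trace = ∫ ω, ∑ i, (P ω * (P ω)ᵀ) i i ∂μ := by
      rw [integral_finset_sum _ fun i _ => hPPTint i i]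
      simp [Matrix.trace, Matrix.diag, hEPPT]
    have h2 : ∀ᵐ ω ∂μ, (p : ℝ) ≤ ∑ i, (P ω * (P ω)ᵀ) i i := by
      filter_upwards [haePX] with ω hω
      have e1 : P ω * PXᵀ = PX := by
        rw [hPXT]
        nth_rewrite 1 [hPX]
        rw [← Matrix.mul_assoc, ← Matrix.mul_assoc, hω, ← hPX]
      have e3 : (PX * (P ω)ᵀ).trace = PX.trace := by
        rw [show PX * (P ω)ᵀ = (P ω * PXᵀ)ᵀ by
          rw [Matrix.transpose_mul, Matrix.transpose_transpose],
          Matrix.trace_transpose, e1]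
      have e4 : (PX * PXᵀ).trace = PX.trace := by rw [hPXT, hPXidem]
      have e2 : ((P ω - PX) * (P ω - PX)ᵀ).trace
          = (P ω * (P ω)ᵀ).trace - PX.trace := by
        rw [Matrix.transpose_sub, Matrix.mul_sub, Matrix.sub_mul, Matrix.sub_mul,
          Matrix.trace_sub, Matrix.trace_sub, Matrix.trace_sub, e1, e3, e4]
        ring
      have e5 : 0 ≤ ((P ω - PX) * (P ω - PX)ᵀ).trace := by
        have : ((P ω - PX) * (P ω - PX)ᵀ).trace
            = ∑ i, ∑ j, ((P ω - PX) i j) ^ 2 := by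
          simp [Matrix.trace, Matrix.diag, Matrix.mul_apply, sq]
        rw [this]
        positivity
      have e6 : (P ω * (P ω)ᵀ).trace = ∑ i, (P ω * (P ω)ᵀ) i i := by
        simp [Matrix.trace, Matrix.diag]
      rw [← e6]
      have := hPXtr
      linarith
    have h3 : Integrable (fun ω => ∑ i, (P ω * (P ω)ᵀ) i i) μ :=
      integrable_finset_sum _ fun i _ => hPPTint i i
    calc (p : ℝ) = ∫ _ω, (p : ℝ) ∂μ := by simp
      _ ≤ ∫ ω, ∑ i, (P ω * (P ω)ᵀ) i i ∂μ := integral_mono_ae (integrable_const _) h3 h2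
      _ = EPPT.trace := h1.symm
  -- conclusion
  refine ⟨?_, hRh, ?_⟩
  · rw [hRt2, hRh, Matrix.trace_sub, hPXtr]
    ring
  · rw [hRt2, hRh]
    have := sq_nonneg σ
    nlinarith
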